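/- Let X be a Hausdorff sequentially compact topological space and D a countable infinite subset of X. For every A ⊆ D, the set A can be covered by the ranges of finitely many sequences of elements of D that converge in X if and only if the set of accumulation points of A in X is finite. -/

import Mathlib

open Set Filter Topology Ordinal

noncomputable section

/-- The derived set of `A`: the set of accumulation (limit) points of `A`. -/
def derivSet {X : Type*} [TopologicalSpace X] (A : Set X) : Set X :=
  {p | p ∈ closure (A \ {p})}

/-- The ordinal space `ω^a + 1 = [0, ω^a]` with the (order) topology. -/
abbrev OrdSpace (a : Ordinal) : Type _ := ↥(Set.Iic (omega0 ^ a))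

/-- The ideal `conv_a` on `ω^a + 1`: sets with finite derived set. -/
def convIdeal (a : Ordinal) : Set (Set (OrdSpace a)) :=
  {A | (derivSet A).Finite}

/-- `I` is an ideal of subsets. -/
structure IsIdeal {S : Type*} (I : Set (Set S)) : Prop where
  empty_mem : ∅ ∈ I
  subset_mem : ∀ {A B : Set S}, A ⊆ B → B ∈ I → A ∈ I
  union_mem : ∀ {A B : Set S}, A ∈ I → B ∈ I → A ∪ B ∈ I

/-- The subsequence of `f` indexed by `A` converges to `x`. -/
def ConvAlong {X : Type*} [TopologicalSpace X] (f : ℕ → X) (A : Set ℕ) (x : X) : Prop :=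
  ∀ U ∈ nhds x, {n ∈ A | f n ∉ U}.Finite

/-- Katětov order: `J ≤_K I`, where `I` lives on `X` and `J` on `Y`. -/
def KatetovLE {X Y : Type*} (J : Set (Set Y)) (I : Set (Set X)) : Prop :=
  ∃ f : X → Y, ∀ A ∈ J, f ⁻¹' A ∈ I

/-- `X ∈ FinBW(I)`: every sequence in `X` has a convergent subsequence indexed
by an `I`-positive set. -/
def InFinBW (I : Set (Set ℕ)) (X : Type*) [TopologicalSpace X] : Prop :=
  ∀ f : ℕ → X, ∃ A : Set ℕ, A ∉ I ∧ ∃ x : X, ConvAlong f A x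

section
variable {X : Type*} [TopologicalSpace X]

lemma derivSet_mono {A B : Set X} (h : A ⊆ B) : derivSet A ⊆ derivSet B :=
  fun p hp => closure_mono (diff_subset_diff_left h) hp

lemma derivSet_subset_closure (A : Set X) : derivSet A ⊆ closure A :=
  fun p hp => closure_mono diff_subset hp

lemma derivSet_iUnion_fin {ι : Type*} [Finite ι] (S : ι → Set X) :
    derivSet (⋃ i, S i) ⊆ ⋃ i, derivSet (S i) := by
  intro p hp
  have h2 : p ∈ closure (⋃ i, (S i \ {p})) := by
    rwa [← iUnion_diff]
  rw [closure_iUnion_of_finite] at h2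
  simpa [derivSet] using h2

lemma derivSet_range_tendsto [T2Space X] {f : ℕ → X} {x : X}
    (hf : Tendsto f atTop (nhds x)) : derivSet (Set.range f) ⊆ {x} := by
  intro p hp
  by_contra hpx
  obtain ⟨U, V, hUo, hVo, hpU, hxV, hUV⟩ := t2_separation (show p ≠ x from hpx)
  set S := Set.range f \ {p} with hS
  have hfin : (S ∩ U).Finite := by
    obtain ⟨N, hN⟩ := (hf.eventually (hVo.mem_nhds hxV)).exists_forall_of_atTop
    apply ((Set.finite_Iio N).image f).subset
    rintro y ⟨⟨⟨n, rfl⟩, -⟩, hyU⟩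
    refine ⟨n, ?_, rfl⟩
    by_contra hn
    exact (disjoint_left.mp hUV hyU) (hN n (le_of_not_gt hn))
  have hsplit : S = (S ∩ U) ∪ (S \ U) := by
    ext y; by_cases hy : y ∈ U <;> simp [hy]
  have hp2 : p ∈ closure (S ∩ U) ∪ closure (S \ U) := by
    rw [← closure_union, ← hsplit]; exact hp
  have hnot : p ∉ closure (S \ U) := fun h =>
    (hUo.isClosed_compl.closure_subset_iff.mpr (fun y hy => hy.2) h) hpU
  have : p ∈ S ∩ U := hfin.isClosed.closure_subset_iff.mpr Subset.rfl (hp2.resolve_right hnot)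
  exact this.1.2 rfl

lemma exists_mem_derivSet [T1Space X] [SeqCompactSpace X] {S : Set X}
    (hS : S.Infinite) : ∃ p, p ∈ derivSet S := by
  classical
  let e := hS.natEmbedding
  obtain ⟨x, φ, hφ, hconv⟩ := SeqCompactSpace.tendsto_subseq (fun n => (e n : X))
  refine ⟨x, ?_⟩
  have hinj : Function.Injective (fun n => ((e (φ n) : X))) :=
    fun a b h => hφ.injective (e.injective (Subtype.ext h))
  have hfin : {n | (e (φ n) : X) = x}.Finite := by
    apply Set.Subsingleton.finite
    intro a ha b hb
    exact hinj (ha.trans hb.symm)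
  have hev : ∀ᶠ n in atTop, (e (φ n) : X) ∈ S \ {x} := by
    have := hfin.eventually_cofinite_notMem
    rw [Nat.cofinite_eq_atTop] at this
    filter_upwards [this] with n hn
    exact ⟨(e (φ n)).2, hn⟩
  exact mem_closure_of_tendsto hconv hev
end

section
variable {X : Type*} [TopologicalSpace X]

def Cov (D S : Set X) : Prop :=
  ∃ (k : ℕ) (d : Fin k → ℕ → X),
    (∀ i n, d i n ∈ D) ∧ (∀ i, ∃ x : X, Tendsto (d i) atTop (nhds x)) ∧
    S ⊆ ⋃ i : Fin k, Set.range (d i)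

variable {D : Set X}

lemma cov_empty : Cov D (∅ : Set X) :=
  ⟨0, Fin.elim0, fun i => i.elim0, fun i => i.elim0, by simp⟩

lemma cov_mono {S T : Set X} (h : S ⊆ T) (hT : Cov D T) : Cov D S := by
  obtain ⟨k, d, h1, h2, h3⟩ := hT
  exact ⟨k, d, h1, h2, h.trans h3⟩

lemma cov_union {S T : Set X} (hS : Cov D S) (hT : Cov D T) : Cov D (S ∪ T) := by
  obtain ⟨k1, d1, h1D, h1c, h1s⟩ := hS
  obtain ⟨k2, d2, h2D, h2c, h2s⟩ := hT
  refine ⟨k1 + k2, Fin.append d1 d2, ?_, ?_, ?_⟩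
  · intro i n
    induction i using Fin.addCases with
    | left j => rw [Fin.append_left]; exact h1D j n
    | right j => rw [Fin.append_right]; exact h2D j n
  · intro i
    induction i using Fin.addCases with
    | left j => rw [Fin.append_left]; exact h1c j
    | right j => rw [Fin.append_right]; exact h2c j
  · rintro y (hy | hy)
    · obtain ⟨j, hj⟩ := mem_iUnion.mp (h1s hy)
      exact mem_iUnion.mpr ⟨Fin.castAdd k2 j, by rwa [Fin.append_left]⟩
    · obtain ⟨j, hj⟩ := mem_iUnion.mp (h2s hy)
      exact mem_iUnion.mpr ⟨Fin.natAdd k1 j, by rwa [Fin.append_right]⟩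

lemma cov_singleton {a : X} (ha : a ∈ D) : Cov D {a} :=
  ⟨1, fun _ _ => a, fun _ _ => ha, fun _ => ⟨a, tendsto_const_nhds⟩, by
    intro y hy; simp_all⟩

lemma cov_finite {S : Set X} (hS : S.Finite) (hSD : S ⊆ D) : Cov D S := by
  refine Set.Finite.induction_on (motive := fun s _ => s ⊆ D → Cov D s) S hS (fun _ => cov_empty)
    (fun ha hs ih hsD => ?_) hSD
  rw [insert_eq]
  exact cov_union (cov_singleton (hsD (mem_insert _ _)))
    (ih fun y hy => hsD (mem_insert_of_mem _ hy))

lemma cov_biUnion {ι : Type*} {E : Set ι} (hE : E.Finite) {g : ι → Set X}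
    (h : ∀ x ∈ E, Cov D (g x)) : Cov D (⋃ x ∈ E, g x) := by
  refine Set.Finite.induction_on
    (motive := fun s _ => (∀ x ∈ s, Cov D (g x)) → Cov D (⋃ x ∈ s, g x)) E hE
    (fun _ => by simpa using cov_empty) (fun ha hs ih h' => ?_) h
  rw [biUnion_insert]
  exact cov_union (h' _ (mem_insert _ _)) (ih fun x hx => h' x (mem_insert_of_mem _ hx))

lemma cov_of_tendsto {S : Set X} (hSD : S ⊆ D) (hSc : S.Countable) (x : X)
    (h : ∀ V ∈ nhds x, (S \ V).Finite) : Cov D S := by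
  rcases S.finite_or_infinite with hfin | hinf
  · exact cov_finite hfin hSD
  · haveI := hSc.to_subtype
    haveI := hinf.to_subtype
    obtain ⟨inst⟩ := nonempty_denumerable S
    let e : ℕ ≃ S := (Denumerable.eqv S).symm
    refine ⟨1, fun _ n => (e n : X), fun _ n => hSD (e n).2, fun _ => ⟨x, ?_⟩, ?_⟩
    · rw [tendsto_def]
      intro V hV
      have hfinV : {n : ℕ | (e n : X) ∈ S \ V}.Finite :=
        (h V hV).preimage ((Subtype.val_injective.comp e.injective).injOn)
      have := hfinV.eventually_cofinite_notMem
      rw [Nat.cofinite_eq_atTop] at this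
      filter_upwards [this] with n hn
      by_contra hnV
      exact hn ⟨(e n).2, hnV⟩
    · intro y hy
      exact mem_iUnion.mpr ⟨0, ⟨e.symm ⟨y, hy⟩, by simp⟩⟩
end

/-- A subset of a countable infinite `D` in a Hausdorff sequentially compact space is
coverable by ranges of finitely many `D`-valued convergent sequences iff its derived
set is finite. -/
theorem stmt0 {X : Type*} [TopologicalSpace X] [T2Space X] [SeqCompactSpace X]
    (D : Set X) (hDc : D.Countable) (hDi : D.Infinite)
    (A : Set X) (hAD : A ⊆ D) :
    (∃ (k : ℕ) (d : Fin k → ℕ → X),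
        (∀ i n, d i n ∈ D) ∧ (∀ i, ∃ x : X, Tendsto (d i) atTop (nhds x)) ∧
        A ⊆ ⋃ i : Fin k, Set.range (d i))
      ↔ (derivSet A).Finite := by
  constructor
  · rintro ⟨k, d, hdD, hdc, hcov⟩
    choose x hx using hdc
    have h1 : derivSet A ⊆ ⋃ i : Fin k, derivSet (Set.range (d i)) :=
      (derivSet_mono hcov).trans (derivSet_iUnion_fin _)
    have h2 : derivSet A ⊆ ⋃ i : Fin k, {x i} := by
      refine h1.trans (iUnion_mono fun i => ?_)
      exact derivSet_range_tendsto (hx i)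
    exact (Set.finite_iUnion fun i => finite_singleton (x i)).subset h2
  · intro hE
    set E := derivSet A with hEdef
    obtain ⟨U, hU, hUd⟩ := hE.t2_separation
    -- the leftover part is finite
    have hopen : IsOpen (⋃ x ∈ E, U x) := isOpen_biUnion fun x _ => (hU x).2
    have hA0 : (A \ ⋃ x ∈ E, U x).Finite := by
      by_contra hinf
      obtain ⟨p, hp⟩ := exists_mem_derivSet (hinf)
      have hpE : p ∈ E := derivSet_mono diff_subset hp
      have hpcl : p ∈ closure (A \ ⋃ x ∈ E, U x) := derivSet_subset_closure _ hp
      have hpnot : p ∉ ⋃ x ∈ E, U x :=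
        hopen.isClosed_compl.closure_subset_iff.mpr (fun y hy => hy.2) hpcl
      exact hpnot (mem_biUnion hpE (hU p).1)
    -- each piece accumulates only at its center
    have hpiece : ∀ x ∈ E, ∀ V ∈ nhds x, ((A ∩ U x) \ V).Finite := by
      intro x hxE V hV
      obtain ⟨W, hWV, hWo, hxW⟩ := mem_nhds_iff.mp hV
      refine Set.Finite.subset ?_ (diff_subset_diff_right hWV)
      by_contra hinf
      obtain ⟨p, hp⟩ := exists_mem_derivSet (hinf)
      have hpcl : p ∈ closure ((A ∩ U x) \ W) := derivSet_subset_closure _ hp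
      have hpE : p ∈ E := derivSet_mono (diff_subset.trans inter_subset_left) hp
      have hpx : p = x := by
        by_contra hne
        have hdisj : Disjoint (U p) (U x) := hUd hpE hxE hne
        have hclU : p ∈ closure (U x) :=
          closure_mono (diff_subset.trans inter_subset_right) hpcl
        have : closure (U x) ⊆ (U p)ᶜ :=
          (hU p).2.isClosed_compl.closure_subset_iff.mpr
            fun y hy => disjoint_right.mp hdisj hy
        exact this hclU (hU p).1
      have hpW : p ∉ W :=
        hWo.isClosed_compl.closure_subset_iff.mpr (fun y hy => hy.2) hpcl
      exact hpW (hpx ▸ hxW)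
    have hcovE : Cov D (⋃ x ∈ E, A ∩ U x) := by
      refine cov_biUnion hE fun x hxE => ?_
      exact cov_of_tendsto (inter_subset_left.trans hAD)
        (hDc.mono (inter_subset_left.trans hAD)) x (hpiece x hxE)
    have hfull : Cov D A := by
      refine cov_mono ?_ (cov_union (cov_finite hA0 (diff_subset.trans hAD)) hcovE)
      intro a ha
      by_cases h : a ∈ ⋃ x ∈ E, U x
      · obtain ⟨x, hxE, hax⟩ := mem_iUnion₂.mp h
        exact Or.inr (mem_biUnion hxE ⟨ha, hax⟩)
      · exact Or.inl ⟨ha, h⟩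
    exact hfull
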